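/- Let w : [0,1] → ℝ be continuous, not affine on [0,1/2] and not affine on [1/2,1] (i.e., there do not exist a, b ∈ ℝ with w(s) = a + b·s for all s ∈ [0,1/2], and likewise for [1/2,1]). For any bounded measurable function v : [0,1] → ℝ define Ψ(v)(t) := (v(t) − t·v(1)) / ( ∫₀^t (v(s) − (s/t)·v(t))² ds + ∫_t^1 (v(1) − v(s) − ((1−s)/(1−t))·(v(1) − v(t)))² ds )^{1/2}, with the conventions s/t := 0 when t = 0, (1−s)/(1−t) := 0 when t = 1, and division by zero yielding 0. Then Ψ is continuous at w with respect to the supremum metric: for every ε > 0 there exists δ > 0 such that every bounded measurable v : [0,1] → ℝ with sup_{t ∈ [0,1]} |v(t) − w(t)| < δ satisfies sup_{t ∈ [0,1]} |Ψ(v)(t) − Ψ(w)(t)| < ε. -/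

import Mathlib

open MeasureTheory intervalIntegral Set


lemma sqrt_diff_le (x y : ℝ) (hx : 0 ≤ x) (hy : 0 ≤ y) :
    |Real.sqrt y - Real.sqrt x| ≤ Real.sqrt |y - x| := by
  wlog h : x ≤ y generalizing x y
  · rw [abs_sub_comm, abs_sub_comm y x]; exact this y x hy hx (le_of_not_ge h)
  rw [abs_of_nonneg (by linarith [Real.sqrt_le_sqrt h] : (0:ℝ) ≤ Real.sqrt y - Real.sqrt x),
    abs_of_nonneg (by linarith : (0:ℝ) ≤ y - x)]
  have key : Real.sqrt y ≤ Real.sqrt x + Real.sqrt (y - x) := by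
    have h2 : y ≤ (Real.sqrt x + Real.sqrt (y - x))^2 := by
      have := Real.sq_sqrt hx
      have := Real.sq_sqrt (by linarith : (0:ℝ) ≤ y - x)
      nlinarith [Real.sqrt_nonneg x, Real.sqrt_nonneg (y - x)]
    calc Real.sqrt y ≤ Real.sqrt ((Real.sqrt x + Real.sqrt (y - x))^2) := Real.sqrt_le_sqrt h2
      _ = Real.sqrt x + Real.sqrt (y - x) := Real.sqrt_sq (by positivity)
  linarith

lemma sq_int_pos {f : ℝ → ℝ} {p q : ℝ} (hpq : p < q) (hf : ContinuousOn f (Icc p q))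
    (hne : ∃ s₀ ∈ Icc p q, f s₀ ≠ 0) : 0 < ∫ s in p..q, f s ^ 2 := by
  obtain ⟨s₀, hs₀, hne⟩ := hne
  have hd : 0 < |f s₀| := abs_pos.2 hne
  have hev : {s : ℝ | |f s₀| / 2 < |f s|} ∈ nhdsWithin s₀ (Icc p q) := by
    have hc : ContinuousWithinAt f (Icc p q) s₀ := hf s₀ hs₀
    have hopen : IsOpen {y : ℝ | |f s₀| / 2 < |y|} := isOpen_lt continuous_const continuous_abs
    exact hc (hopen.mem_nhds (by simp only [mem_setOf_eq]; linarith))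
  rw [Metric.mem_nhdsWithin_iff] at hev
  obtain ⟨r, hr, hball⟩ := hev
  set p' := max p (s₀ - r / 2) with hp'
  set q' := min q (s₀ + r / 2) with hq'
  have hpp' : p ≤ p' := le_max_left _ _
  have hq'q : q' ≤ q := min_le_left _ _
  have hp's : p' ≤ s₀ := max_le hs₀.1 (by linarith)
  have hsq' : s₀ ≤ q' := le_min hs₀.2 (by linarith)
  have hp'q' : p' < q' := by
    rcases lt_or_eq_of_le hs₀.2 with h | h
    · exact lt_of_le_of_lt hp's (lt_min h (by linarith))
    · have h1 : p' < s₀ := by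
        apply max_lt (h ▸ hpq); linarith
      linarith
  -- lower bound on [p', q']
  have hlow : ∀ s ∈ Icc p' q', (|f s₀| / 2) ^ 2 ≤ f s ^ 2 := by
    intro s hs
    have hmem : s ∈ Metric.ball s₀ r ∩ Icc p q := by
      constructor
      · rw [Metric.mem_ball, Real.dist_eq, abs_sub_lt_iff]
        constructor <;> [skip; skip] <;>
          · have := hs.1; have := hs.2
            have : s₀ - r/2 ≤ s := le_trans (le_max_right _ _) hs.1
            have : s ≤ s₀ + r/2 := le_trans hs.2 (min_le_right _ _)
            linarith
      · exact ⟨le_trans hpp' hs.1, le_trans hs.2 hq'q⟩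
    have := hball hmem
    have habs : |f s₀| / 2 ≤ |f s| := le_of_lt this
    calc (|f s₀| / 2)^2 ≤ |f s|^2 := by
          apply pow_le_pow_left₀ (by positivity) habs
      _ = f s ^ 2 := sq_abs _
  -- integrability
  have hint : IntervalIntegrable (fun s => f s ^ 2) volume p q :=
    ((hf.pow 2).mono (by rw [uIcc_of_le hpq.le])).intervalIntegrable
  have hint1 : IntervalIntegrable (fun s => f s ^ 2) volume p p' :=
    hint.mono_set (by rw [uIcc_of_le hpq.le, uIcc_of_le hpp']; exact Icc_subset_Icc le_rfl (by linarith))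
  have hint2 : IntervalIntegrable (fun s => f s ^ 2) volume p' q' :=
    hint.mono_set (by rw [uIcc_of_le hpq.le, uIcc_of_le hp'q'.le]; exact Icc_subset_Icc hpp' hq'q)
  have hint3 : IntervalIntegrable (fun s => f s ^ 2) volume q' q :=
    hint.mono_set (by rw [uIcc_of_le hpq.le, uIcc_of_le hq'q]; exact Icc_subset_Icc (by linarith) le_rfl)
  have hsplit : (∫ s in p..q, f s ^ 2)
      = (∫ s in p..p', f s ^ 2) + (∫ s in p'..q', f s ^ 2) + (∫ s in q'..q, f s ^ 2) := by
    rw [← integral_add_adjacent_intervals (hint1.trans hint2) hint3,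
      ← integral_add_adjacent_intervals hint1 hint2]
  have h1 : 0 ≤ ∫ s in p..p', f s ^ 2 :=
    integral_nonneg hpp' (fun s _ => sq_nonneg _)
  have h3 : 0 ≤ ∫ s in q'..q, f s ^ 2 :=
    integral_nonneg hq'q (fun s _ => sq_nonneg _)
  have h2 : (q' - p') * (|f s₀| / 2)^2 ≤ ∫ s in p'..q', f s ^ 2 := by
    have := intervalIntegral.integral_mono_on hp'q'.le
      (intervalIntegrable_const : IntervalIntegrable (fun _ => (|f s₀| / 2)^2) volume p' q')
      hint2 hlow
    simpa using this
  have : 0 < (q' - p') * (|f s₀| / 2)^2 := mul_pos (by linarith) (by positivity)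
  linarith


lemma expand_cont {f g : ℝ → ℝ} {p q : ℝ} (hf : ContinuousOn f (uIcc p q))
    (hg : ContinuousOn g (uIcc p q)) :
    Continuous (fun u : ℝ => ∫ s in p..q, (f s - g s * u) ^ 2) := by
  have hf2 : IntervalIntegrable (fun s => f s ^ 2) volume p q := (hf.pow 2).intervalIntegrable
  have hg2 : IntervalIntegrable (fun s => g s ^ 2) volume p q := (hg.pow 2).intervalIntegrable
  have hfg : IntervalIntegrable (fun s => f s * g s) volume p q := (hf.mul hg).intervalIntegrable
  have key : (fun u : ℝ => ∫ s in p..q, (f s - g s * u) ^ 2)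
      = fun u : ℝ => (∫ s in p..q, f s ^ 2) - 2 * u * (∫ s in p..q, f s * g s)
        + u ^ 2 * (∫ s in p..q, g s ^ 2) := by
    funext u
    have e1 : ∀ s : ℝ, (f s - g s * u) ^ 2
        = f s ^ 2 - (2 * u) * (f s * g s) + u ^ 2 * g s ^ 2 := fun s => by ring
    calc (∫ s in p..q, (f s - g s * u) ^ 2)
        = ∫ s in p..q, (f s ^ 2 - (2 * u) * (f s * g s) + u ^ 2 * g s ^ 2) :=
          integral_congr (fun s _ => e1 s)
      _ = (∫ s in p..q, (f s ^ 2 - (2 * u) * (f s * g s))) + ∫ s in p..q, u ^ 2 * g s ^ 2 :=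
          integral_add (hf2.sub (hfg.const_mul _)) (hg2.const_mul _)
      _ = (∫ s in p..q, f s ^ 2) - (∫ s in p..q, (2 * u) * (f s * g s))
            + ∫ s in p..q, u ^ 2 * g s ^ 2 := by
          rw [integral_sub hf2 (hfg.const_mul _)]
      _ = (∫ s in p..q, f s ^ 2) - 2 * u * (∫ s in p..q, f s * g s)
            + u ^ 2 * (∫ s in p..q, g s ^ 2) := by
          rw [intervalIntegral.integral_const_mul, intervalIntegral.integral_const_mul]
  rw [key]
  continuity




lemma denom_lower (w : ℝ → ℝ) (hw : ContinuousOn w (Set.Icc 0 1))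
    (h1 : ¬ ∃ a b : ℝ, ∀ s ∈ Set.Icc (0 : ℝ) (1/2), w s = a + b * s)
    (h2 : ¬ ∃ a b : ℝ, ∀ s ∈ Set.Icc (1/2 : ℝ) 1, w s = a + b * s) :
    ∃ c > 0, ∀ t ∈ Set.Icc (0:ℝ) 1,
      c ≤ (∫ s in (0:ℝ)..t, (w s - s / t * w t) ^ 2)
        + ∫ s in t..(1:ℝ), (w 1 - w s - (1 - s) / (1 - t) * (w 1 - w t)) ^ 2 := by
  push_neg at h1 h2
  have hw1 : ContinuousOn w (Icc 0 (1/2)) := hw.mono (Icc_subset_Icc le_rfl (by norm_num))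
  have hw2 : ContinuousOn w (Icc (1/2) 1) := hw.mono (Icc_subset_Icc (by norm_num) le_rfl)
  set φ₁ : ℝ → ℝ := fun u => ∫ s in (0:ℝ)..(1/2), (w s - s * u) ^ 2 with hφ₁
  set φ₂ : ℝ → ℝ := fun u => ∫ s in (1/2:ℝ)..1, ((w 1 - w s) - (1 - s) * u) ^ 2 with hφ₂
  have hφ₁c : Continuous φ₁ :=
    expand_cont (by rw [uIcc_of_le (by norm_num : (0:ℝ) ≤ 1/2)]; exact hw1) (continuous_id.continuousOn)
  have hφ₂c : Continuous φ₂ :=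
    expand_cont (f := fun s => w 1 - w s) (g := fun s => 1 - s)
      (by rw [uIcc_of_le (by norm_num : (1/2:ℝ) ≤ 1)]; exact continuousOn_const.sub hw2)
      ((continuous_const.sub continuous_id).continuousOn)
  have hφ₁pos : ∀ u : ℝ, 0 < φ₁ u := by
    intro u
    apply sq_int_pos (by norm_num : (0:ℝ) < 1/2)
    · exact hw1.sub ((continuous_id.mul continuous_const).continuousOn)
    · obtain ⟨s₀, hs₀, hne⟩ := h1 0 u
      exact ⟨s₀, hs₀, fun h => hne (by linarith [h] )⟩
  have hφ₂pos : ∀ u : ℝ, 0 < φ₂ u := by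
    intro u
    apply sq_int_pos (by norm_num : (1/2:ℝ) < 1)
    · exact (continuousOn_const.sub hw2).sub
        ((continuous_const.sub continuous_id).mul continuous_const).continuousOn
    · obtain ⟨s₀, hs₀, hne⟩ := h2 (w 1 - u) u
      refine ⟨s₀, hs₀, fun h => hne ?_⟩
      have : (1 - s₀) * u = w 1 - w s₀ := by linarith [h]
      nlinarith [this]
  -- min of φ₁ ∘ (w t / t) on [1/2, 1]
  have hu₁ : ContinuousOn (fun t => w t / t) (Icc (1/2:ℝ) 1) :=
    hw2.div continuousOn_id (fun t ht => by have := ht.1; intro h; rw [h] at this; norm_num at this)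
  obtain ⟨t₁, ht₁, hmin₁⟩ := isCompact_Icc.exists_isMinOn (Set.nonempty_Icc.2 (by norm_num))
    (hφ₁c.comp_continuousOn hu₁)
  -- min of φ₂ ∘ ((w 1 - w t)/(1 - t)) on [0, 1/2]
  have hu₂ : ContinuousOn (fun t => (w 1 - w t) / (1 - t)) (Icc (0:ℝ) (1/2)) :=
    (continuousOn_const.sub hw1).div (continuous_const.sub continuous_id).continuousOn
      (fun t ht => by have := ht.2; intro h; have : (1:ℝ) - t = 0 := h; linarith)
  obtain ⟨t₂, ht₂, hmin₂⟩ := isCompact_Icc.exists_isMinOn (Set.nonempty_Icc.2 (by norm_num))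
    (hφ₂c.comp_continuousOn hu₂)
  set c₁ := φ₁ (w t₁ / t₁) with hc₁
  set c₂ := φ₂ ((w 1 - w t₂) / (1 - t₂)) with hc₂
  refine ⟨min c₁ c₂, lt_min (hφ₁pos _) (hφ₂pos _), ?_⟩
  intro t ht
  obtain ⟨ht0, ht1⟩ := ht
  -- integrability of the two integrands for w
  have hA_cont : ContinuousOn (fun s => (w s - s / t * w t) ^ 2) (Icc 0 1) :=
    ((hw.sub (((continuous_id.div_const t).mul continuous_const).continuousOn)).pow 2)
  have hB_cont : ContinuousOn
      (fun s => (w 1 - w s - (1 - s) / (1 - t) * (w 1 - w t)) ^ 2) (Icc 0 1) :=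
    (((continuousOn_const.sub hw).sub
      ((((continuous_const.sub continuous_id).div_const (1 - t)).mul continuous_const).continuousOn)).pow 2)
  rcases le_or_gt t (1/2) with hhalf | hhalf
  · -- use the second integral
    have hInt1 : IntervalIntegrable (fun s => (w 1 - w s - (1 - s) / (1 - t) * (w 1 - w t)) ^ 2)
        volume t (1/2) :=
      (hB_cont.mono (by rw [uIcc_of_le hhalf]; exact Icc_subset_Icc ht0 (by norm_num))).intervalIntegrable
    have hInt2 : IntervalIntegrable (fun s => (w 1 - w s - (1 - s) / (1 - t) * (w 1 - w t)) ^ 2)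
        volume (1/2) 1 :=
      (hB_cont.mono (by rw [uIcc_of_le (by norm_num : (1/2:ℝ) ≤ 1)]; exact Icc_subset_Icc (by norm_num) le_rfl)).intervalIntegrable
    have hsplit : (∫ s in t..(1:ℝ), (w 1 - w s - (1 - s) / (1 - t) * (w 1 - w t)) ^ 2)
        = (∫ s in t..(1/2:ℝ), (w 1 - w s - (1 - s) / (1 - t) * (w 1 - w t)) ^ 2)
          + ∫ s in (1/2:ℝ)..1, (w 1 - w s - (1 - s) / (1 - t) * (w 1 - w t)) ^ 2 :=
      (integral_add_adjacent_intervals hInt1 hInt2).symm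
    have heq : (∫ s in (1/2:ℝ)..1, (w 1 - w s - (1 - s) / (1 - t) * (w 1 - w t)) ^ 2)
        = φ₂ ((w 1 - w t) / (1 - t)) := by
      apply integral_congr
      intro s _
      ring
    have h1nn : 0 ≤ ∫ s in (0:ℝ)..t, (w s - s / t * w t) ^ 2 :=
      integral_nonneg ht0 (fun s _ => sq_nonneg _)
    have h2nn : 0 ≤ ∫ s in t..(1/2:ℝ), (w 1 - w s - (1 - s) / (1 - t) * (w 1 - w t)) ^ 2 :=
      integral_nonneg hhalf (fun s _ => sq_nonneg _)
    have hge : c₂ ≤ φ₂ ((w 1 - w t) / (1 - t)) := hmin₂ ⟨ht0, hhalf⟩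
    calc min c₁ c₂ ≤ c₂ := min_le_right _ _
      _ ≤ φ₂ ((w 1 - w t) / (1 - t)) := hge
      _ ≤ _ := by rw [hsplit, heq]; linarith
  · -- t ≥ 1/2 : use the first integral
    have hInt1 : IntervalIntegrable (fun s => (w s - s / t * w t) ^ 2) volume 0 (1/2) :=
      (hA_cont.mono (by rw [uIcc_of_le (by norm_num : (0:ℝ) ≤ 1/2)]; exact Icc_subset_Icc le_rfl (by norm_num))).intervalIntegrable
    have hInt2 : IntervalIntegrable (fun s => (w s - s / t * w t) ^ 2) volume (1/2) t :=
      (hA_cont.mono (by rw [uIcc_of_le hhalf.le]; exact Icc_subset_Icc (by norm_num) ht1)).intervalIntegrable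
    have hsplit : (∫ s in (0:ℝ)..t, (w s - s / t * w t) ^ 2)
        = (∫ s in (0:ℝ)..(1/2:ℝ), (w s - s / t * w t) ^ 2)
          + ∫ s in (1/2:ℝ)..t, (w s - s / t * w t) ^ 2 :=
      (integral_add_adjacent_intervals hInt1 hInt2).symm
    have heq : (∫ s in (0:ℝ)..(1/2:ℝ), (w s - s / t * w t) ^ 2) = φ₁ (w t / t) := by
      apply integral_congr
      intro s _
      ring
    have h1nn : 0 ≤ ∫ s in (1/2:ℝ)..t, (w s - s / t * w t) ^ 2 :=
      integral_nonneg hhalf.le (fun s _ => sq_nonneg _)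
    have h2nn : 0 ≤ ∫ s in t..(1:ℝ), (w 1 - w s - (1 - s) / (1 - t) * (w 1 - w t)) ^ 2 :=
      integral_nonneg ht1 (fun s _ => sq_nonneg _)
    have hge : c₁ ≤ φ₁ (w t / t) := hmin₁ ⟨hhalf.le, ht1⟩
    calc min c₁ c₂ ≤ c₁ := min_le_left _ _
      _ ≤ φ₁ (w t / t) := hge
      _ ≤ _ := by rw [hsplit, heq]; linarith



lemma ratio_bound {a b x y c δ M C₀ : ℝ} (hc : 0 < c) (hδ : 0 ≤ δ) (hM : 0 < M) (hC₀ : 0 < C₀)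
    (hx : c/2 ≤ x) (hy : c ≤ y) (hab : |a - b| ≤ 2*δ) (hb : |b| ≤ 2*M) (hxy : |x - y| ≤ C₀*δ) :
    |a / Real.sqrt x - b / Real.sqrt y|
      ≤ 2*δ / Real.sqrt (c/2) + 2*M * Real.sqrt (C₀*δ) / (c/2) := by
  have hc2 : (0:ℝ) < c/2 := by linarith
  have hsc : 0 < Real.sqrt (c/2) := Real.sqrt_pos.2 hc2
  have hsx : Real.sqrt (c/2) ≤ Real.sqrt x := Real.sqrt_le_sqrt hx
  have hsy : Real.sqrt (c/2) ≤ Real.sqrt y := Real.sqrt_le_sqrt (by linarith)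
  have hsxpos : 0 < Real.sqrt x := lt_of_lt_of_le hsc hsx
  have hsypos : 0 < Real.sqrt y := lt_of_lt_of_le hsc hsy
  have hid : a / Real.sqrt x - b / Real.sqrt y
      = (a - b) / Real.sqrt x
        + b * (Real.sqrt y - Real.sqrt x) / (Real.sqrt x * Real.sqrt y) := by
    field_simp
    ring
  rw [hid]
  have hds : |Real.sqrt y - Real.sqrt x| ≤ Real.sqrt (C₀*δ) := by
    calc |Real.sqrt y - Real.sqrt x| ≤ Real.sqrt |y - x| :=
          sqrt_diff_le x y (by linarith) (by linarith)
      _ ≤ Real.sqrt (C₀*δ) := Real.sqrt_le_sqrt (by rw [abs_sub_comm] at hxy; exact hxy)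
  have hprod : c/2 ≤ Real.sqrt x * Real.sqrt y := by
    calc c/2 = Real.sqrt (c/2) * Real.sqrt (c/2) := (Real.mul_self_sqrt hc2.le).symm
      _ ≤ Real.sqrt x * Real.sqrt y := mul_le_mul hsx hsy hsc.le hsxpos.le
  have h1 : |(a - b) / Real.sqrt x| ≤ 2*δ / Real.sqrt (c/2) := by
    rw [abs_div, abs_of_pos hsxpos]
    exact div_le_div₀ (by linarith) hab hsc hsx
  have h2 : |b * (Real.sqrt y - Real.sqrt x) / (Real.sqrt x * Real.sqrt y)|
      ≤ 2*M * Real.sqrt (C₀*δ) / (c/2) := by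
    rw [abs_div, abs_mul, abs_of_pos (mul_pos hsxpos hsypos)]
    exact div_le_div₀ (by positivity)
      (mul_le_mul hb hds (abs_nonneg _) (by linarith)) hc2 hprod
  calc |(a - b) / Real.sqrt x + b * (Real.sqrt y - Real.sqrt x) / (Real.sqrt x * Real.sqrt y)|
      ≤ |(a - b) / Real.sqrt x| + |b * (Real.sqrt y - Real.sqrt x) / (Real.sqrt x * Real.sqrt y)| :=
        abs_add_le _ _
    _ ≤ 2*δ / Real.sqrt (c/2) + 2*M * Real.sqrt (C₀*δ) / (c/2) := add_le_add h1 h2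


-- integrability of the A-integrand for a bounded measurable v
lemma intA {v : ℝ → ℝ} {t K : ℝ} (hv : Measurable v) (ht : t ∈ Icc (0:ℝ) 1)
    (hK : 0 ≤ K) (hvbd : ∀ s ∈ Icc (0:ℝ) 1, |v s| ≤ K) :
    IntervalIntegrable (fun s => (v s - s / t * v t) ^ 2) volume 0 t := by
  rw [intervalIntegrable_iff, uIoc_of_le ht.1]
  apply Measure.integrableOn_of_bounded (M := (2*K)^2) measure_Ioc_lt_top.ne
    ((hv.sub ((measurable_id.div_const t).mul measurable_const)).pow_const 2).aestronglyMeasurable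
  rw [ae_restrict_iff' measurableSet_Ioc]
  apply ae_of_all
  intro s hs
  have hs1 : s ∈ Icc (0:ℝ) 1 := ⟨hs.1.le, hs.2.trans ht.2⟩
  have hr0 : 0 ≤ s / t := div_nonneg hs.1.le ht.1
  have hr1 : s / t ≤ 1 := div_le_one_of_le₀ hs.2 ht.1
  have hvs := hvbd s hs1
  have hvt := hvbd t ht
  have hx : |v s - s / t * v t| ≤ 2*K := by
    calc |v s - s / t * v t| ≤ |v s| + |s / t * v t| := abs_sub _ _
      _ = |v s| + (s/t) * |v t| := by rw [abs_mul, abs_of_nonneg hr0]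
      _ ≤ K + 1 * K := by
          have h1 : (s/t) * |v t| ≤ 1 * |v t| := by
            apply mul_le_mul_of_nonneg_right hr1 (abs_nonneg _)
          have h2 : (1:ℝ) * |v t| ≤ 1 * K := by simpa using hvt
          linarith
      _ = 2*K := by ring
  rw [Real.norm_eq_abs, abs_of_nonneg (sq_nonneg _), ← sq_abs]
  exact pow_le_pow_left₀ (abs_nonneg _) hx 2

lemma intB {v : ℝ → ℝ} {t K : ℝ} (hv : Measurable v) (ht : t ∈ Icc (0:ℝ) 1)
    (hK : 0 ≤ K) (hvbd : ∀ s ∈ Icc (0:ℝ) 1, |v s| ≤ K) :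
    IntervalIntegrable (fun s => (v 1 - v s - (1 - s) / (1 - t) * (v 1 - v t)) ^ 2) volume t 1 := by
  rw [intervalIntegrable_iff, uIoc_of_le ht.2]
  apply Measure.integrableOn_of_bounded (M := (4*K)^2) measure_Ioc_lt_top.ne
    (((measurable_const.sub hv).sub
      (((measurable_const.sub measurable_id).div_const (1-t)).mul measurable_const)).pow_const
        2).aestronglyMeasurable
  rw [ae_restrict_iff' measurableSet_Ioc]
  apply ae_of_all
  intro s hs
  have hs1 : s ∈ Icc (0:ℝ) 1 := ⟨ht.1.trans hs.1.le, hs.2⟩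
  have hr0 : 0 ≤ (1 - s) / (1 - t) := div_nonneg (by linarith [hs1.2]) (by linarith [hs.1, hs.2])
  have hr1 : (1 - s) / (1 - t) ≤ 1 :=
    div_le_one_of_le₀ (by linarith [hs.1]) (by linarith [hs.1, hs.2])
  have hvs := hvbd s hs1
  have hvt := hvbd t ht
  have hv1 := hvbd 1 (by norm_num)
  have hx : |v 1 - v s - (1 - s) / (1 - t) * (v 1 - v t)| ≤ 4*K := by
    calc |v 1 - v s - (1 - s) / (1 - t) * (v 1 - v t)|
        ≤ |v 1 - v s| + |(1 - s) / (1 - t) * (v 1 - v t)| := abs_sub _ _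
      _ ≤ (|v 1| + |v s|) + 1 * |v 1 - v t| := by
          rw [abs_mul, abs_of_nonneg hr0]
          have := abs_sub (v 1) (v s)
          have := mul_le_mul_of_nonneg_right hr1 (abs_nonneg (v 1 - v t))
          linarith
      _ ≤ (K + K) + 1 * (|v 1| + |v t|) := by
          have := abs_sub (v 1) (v t)
          linarith
      _ ≤ 4*K := by linarith
  rw [Real.norm_eq_abs, abs_of_nonneg (sq_nonneg _), ← sq_abs]
  exact pow_le_pow_left₀ (abs_nonneg _) hx 2


lemma diffA {v w : ℝ → ℝ} {t δ Kv Kw : ℝ} (ht : t ∈ Icc (0:ℝ) 1) (hδ : 0 ≤ δ)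
    (hKv : 0 ≤ Kv) (hKw : 0 ≤ Kw)
    (hiv : IntervalIntegrable (fun s => (v s - s / t * v t) ^ 2) volume 0 t)
    (hiw : IntervalIntegrable (fun s => (w s - s / t * w t) ^ 2) volume 0 t)
    (hvbd : ∀ s ∈ Icc (0:ℝ) 1, |v s| ≤ Kv) (hwbd : ∀ s ∈ Icc (0:ℝ) 1, |w s| ≤ Kw)
    (hptw : ∀ s ∈ Icc (0:ℝ) 1, |v s - w s| ≤ δ) :
    |(∫ s in (0:ℝ)..t, (v s - s / t * v t) ^ 2) - ∫ s in (0:ℝ)..t, (w s - s / t * w t) ^ 2|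
      ≤ 2*δ*(2*Kv + 2*Kw) := by
  rw [← integral_sub hiv hiw]
  have key : ∀ s ∈ Set.uIoc (0:ℝ) t,
      ‖(v s - s / t * v t) ^ 2 - (w s - s / t * w t) ^ 2‖ ≤ 2*δ*(2*Kv + 2*Kw) := by
    intro s hs
    rw [uIoc_of_le ht.1] at hs
    have hs1 : s ∈ Icc (0:ℝ) 1 := ⟨hs.1.le, hs.2.trans ht.2⟩
    have hr0 : 0 ≤ s / t := div_nonneg hs.1.le ht.1
    have hr1 : s / t ≤ 1 := div_le_one_of_le₀ hs.2 ht.1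
    set x := v s - s / t * v t with hxd
    set y := w s - s / t * w t with hyd
    have hxb : |x| ≤ 2*Kv := by
      calc |x| ≤ |v s| + |s/t * v t| := abs_sub _ _
        _ ≤ Kv + 1 * Kv := by
            rw [abs_mul, abs_of_nonneg hr0]
            have h1 := mul_le_mul_of_nonneg_right hr1 (abs_nonneg (v t))
            have h2 := mul_le_mul_of_nonneg_left (hvbd t ht) (zero_le_one (α := ℝ))
            have := hvbd s hs1
            linarith
        _ = 2*Kv := by ring
    have hyb : |y| ≤ 2*Kw := by
      calc |y| ≤ |w s| + |s/t * w t| := abs_sub _ _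
        _ ≤ Kw + 1 * Kw := by
            rw [abs_mul, abs_of_nonneg hr0]
            have h1 := mul_le_mul_of_nonneg_right hr1 (abs_nonneg (w t))
            have h2 := mul_le_mul_of_nonneg_left (hwbd t ht) (zero_le_one (α := ℝ))
            have := hwbd s hs1
            linarith
        _ = 2*Kw := by ring
    have hdiff : |x - y| ≤ 2*δ := by
      have e : x - y = (v s - w s) - s/t * (v t - w t) := by rw [hxd, hyd]; ring
      rw [e]
      calc |(v s - w s) - s/t * (v t - w t)|
          ≤ |v s - w s| + |s/t * (v t - w t)| := abs_sub _ _
        _ ≤ δ + 1 * δ := by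
            rw [abs_mul, abs_of_nonneg hr0]
            have h1 := mul_le_mul_of_nonneg_right hr1 (abs_nonneg (v t - w t))
            have h2 := mul_le_mul_of_nonneg_left (hptw t ht) (zero_le_one (α := ℝ))
            have := hptw s hs1
            linarith
        _ = 2*δ := by ring
    have e2 : x^2 - y^2 = (x - y) * (x + y) := by ring
    rw [Real.norm_eq_abs, e2, abs_mul]
    have hsum : |x + y| ≤ 2*Kv + 2*Kw := (abs_add_le x y).trans (by linarith)
    calc |x - y| * |x + y| ≤ (2*δ) * (2*Kv + 2*Kw) :=
          mul_le_mul hdiff hsum (abs_nonneg _) (by linarith)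
      _ = 2*δ*(2*Kv + 2*Kw) := by ring
  calc ‖∫ s in (0:ℝ)..t, ((v s - s / t * v t) ^ 2 - (w s - s / t * w t) ^ 2)‖
      ≤ 2*δ*(2*Kv + 2*Kw) * |t - 0| := intervalIntegral.norm_integral_le_of_norm_le_const key
    _ ≤ 2*δ*(2*Kv + 2*Kw) * 1 := by
        apply mul_le_mul_of_nonneg_left _ (by positivity)
        rw [sub_zero, abs_of_nonneg ht.1]; exact ht.2
    _ = 2*δ*(2*Kv + 2*Kw) := by ring

lemma diffB {v w : ℝ → ℝ} {t δ Kv Kw : ℝ} (ht : t ∈ Icc (0:ℝ) 1) (hδ : 0 ≤ δ)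
    (hKv : 0 ≤ Kv) (hKw : 0 ≤ Kw)
    (hiv : IntervalIntegrable (fun s => (v 1 - v s - (1 - s) / (1 - t) * (v 1 - v t)) ^ 2) volume t 1)
    (hiw : IntervalIntegrable (fun s => (w 1 - w s - (1 - s) / (1 - t) * (w 1 - w t)) ^ 2) volume t 1)
    (hvbd : ∀ s ∈ Icc (0:ℝ) 1, |v s| ≤ Kv) (hwbd : ∀ s ∈ Icc (0:ℝ) 1, |w s| ≤ Kw)
    (hptw : ∀ s ∈ Icc (0:ℝ) 1, |v s - w s| ≤ δ) :
    |(∫ s in t..(1:ℝ), (v 1 - v s - (1 - s) / (1 - t) * (v 1 - v t)) ^ 2)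
        - ∫ s in t..(1:ℝ), (w 1 - w s - (1 - s) / (1 - t) * (w 1 - w t)) ^ 2|
      ≤ 4*δ*(4*Kv + 4*Kw) := by
  rw [← integral_sub hiv hiw]
  have h1m : (1:ℝ) ∈ Icc (0:ℝ) 1 := by norm_num
  have key : ∀ s ∈ Set.uIoc t (1:ℝ),
      ‖(v 1 - v s - (1 - s) / (1 - t) * (v 1 - v t)) ^ 2
        - (w 1 - w s - (1 - s) / (1 - t) * (w 1 - w t)) ^ 2‖ ≤ 4*δ*(4*Kv + 4*Kw) := by
    intro s hs
    rw [uIoc_of_le ht.2] at hs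
    have hs1 : s ∈ Icc (0:ℝ) 1 := ⟨ht.1.trans hs.1.le, hs.2⟩
    have h1t : 0 < 1 - t := by linarith [hs.1, hs.2]
    have hr0 : 0 ≤ (1 - s) / (1 - t) := div_nonneg (by linarith [hs1.2]) h1t.le
    have hr1 : (1 - s) / (1 - t) ≤ 1 := div_le_one_of_le₀ (by linarith [hs.1]) h1t.le
    set x := v 1 - v s - (1 - s) / (1 - t) * (v 1 - v t) with hxd
    set y := w 1 - w s - (1 - s) / (1 - t) * (w 1 - w t) with hyd
    have habs : ∀ (u : ℝ → ℝ) (K : ℝ), (∀ s ∈ Icc (0:ℝ) 1, |u s| ≤ K) →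
        |u 1 - u s - (1 - s) / (1 - t) * (u 1 - u t)| ≤ 4*K := by
      intro u K hub
      calc |u 1 - u s - (1 - s) / (1 - t) * (u 1 - u t)|
          ≤ |u 1 - u s| + |(1 - s) / (1 - t) * (u 1 - u t)| := abs_sub _ _
        _ ≤ (|u 1| + |u s|) + 1 * (|u 1| + |u t|) := by
            rw [abs_mul, abs_of_nonneg hr0]
            have h1 := mul_le_mul_of_nonneg_right hr1 (abs_nonneg (u 1 - u t))
            have h2 := abs_sub (u 1) (u s)
            have h3 := abs_sub (u 1) (u t)
            have h4 := mul_le_mul_of_nonneg_left h3 (zero_le_one (α := ℝ))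
            linarith
        _ ≤ 4*K := by
            have := hub 1 h1m; have := hub s hs1; have := hub t ht
            linarith
    have hxb : |x| ≤ 4*Kv := habs v Kv hvbd
    have hyb : |y| ≤ 4*Kw := habs w Kw hwbd
    have hdiff : |x - y| ≤ 4*δ := by
      have e : x - y = ((v 1 - w 1) - (v s - w s))
          - (1 - s) / (1 - t) * ((v 1 - w 1) - (v t - w t)) := by rw [hxd, hyd]; ring
      rw [e]
      calc |((v 1 - w 1) - (v s - w s)) - (1 - s) / (1 - t) * ((v 1 - w 1) - (v t - w t))|
          ≤ |(v 1 - w 1) - (v s - w s)|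
            + |(1 - s) / (1 - t) * ((v 1 - w 1) - (v t - w t))| := abs_sub _ _
        _ ≤ (δ + δ) + 1 * (δ + δ) := by
            rw [abs_mul, abs_of_nonneg hr0]
            have h1 := mul_le_mul_of_nonneg_right hr1
              (abs_nonneg ((v 1 - w 1) - (v t - w t)))
            have h2 := abs_sub (v 1 - w 1) (v s - w s)
            have h3 := abs_sub (v 1 - w 1) (v t - w t)
            have h4 := mul_le_mul_of_nonneg_left h3 (zero_le_one (α := ℝ))
            have := hptw 1 h1m; have := hptw s hs1; have := hptw t ht
            linarith
        _ = 4*δ := by ring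
    have e2 : x^2 - y^2 = (x - y) * (x + y) := by ring
    rw [Real.norm_eq_abs, e2, abs_mul]
    have hsum : |x + y| ≤ 4*Kv + 4*Kw := (abs_add_le x y).trans (by linarith)
    calc |x - y| * |x + y| ≤ (4*δ) * (4*Kv + 4*Kw) :=
          mul_le_mul hdiff hsum (abs_nonneg _) (by linarith)
      _ = 4*δ*(4*Kv + 4*Kw) := by ring
  calc ‖∫ s in t..(1:ℝ), ((v 1 - v s - (1 - s) / (1 - t) * (v 1 - v t)) ^ 2
          - (w 1 - w s - (1 - s) / (1 - t) * (w 1 - w t)) ^ 2)‖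
      ≤ 4*δ*(4*Kv + 4*Kw) * |1 - t| := intervalIntegral.norm_integral_le_of_norm_le_const key
    _ ≤ 4*δ*(4*Kv + 4*Kw) * 1 := by
        apply mul_le_mul_of_nonneg_left _ (by positivity)
        rw [abs_of_nonneg (by linarith [ht.2] : (0:ℝ) ≤ 1 - t)]; linarith [ht.1]
    _ = 4*δ*(4*Kv + 4*Kw) := by ring

/-- The integral-type self-normalized ratio mapping.  Lean's convention `x / 0 = 0`
implements the conventions `s/t := 0` for `t = 0`, `(1-s)/(1-t) := 0` for `t = 1`, and
division by a zero denominator yielding `0`. -/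
noncomputable def snRatioInt (v : ℝ → ℝ) (t : ℝ) : ℝ :=
  (v t - t * v 1) /
    Real.sqrt ((∫ s in (0 : ℝ)..t, (v s - s / t * v t) ^ 2)
      + ∫ s in t..(1 : ℝ), (v 1 - v s - (1 - s) / (1 - t) * (v 1 - v t)) ^ 2)

/-- The integral-type self-normalized ratio mapping is continuous (w.r.t. the supremum metric
on `[0,1]`, over bounded measurable functions) at every continuous `w` that is not affine on
`[0,1/2]` nor on `[1/2,1]`. -/
theorem stmt_5 (w : ℝ → ℝ) (hw : ContinuousOn w (Set.Icc 0 1))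
    (h1 : ¬ ∃ a b : ℝ, ∀ s ∈ Set.Icc (0 : ℝ) (1/2), w s = a + b * s)
    (h2 : ¬ ∃ a b : ℝ, ∀ s ∈ Set.Icc (1/2 : ℝ) 1, w s = a + b * s) :
    ∀ ε > 0, ∃ δ > 0, ∀ v : ℝ → ℝ, Measurable v →
      (∃ M : ℝ, ∀ t ∈ Set.Icc (0 : ℝ) 1, |v t| ≤ M) →
      sSup ((fun t => |v t - w t|) '' Set.Icc (0 : ℝ) 1) < δ →
      sSup ((fun t => |snRatioInt v t - snRatioInt w t|) '' Set.Icc (0 : ℝ) 1) < ε := by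
  intro ε hε
  obtain ⟨c, hc, hcD⟩ := denom_lower w hw h1 h2
  obtain ⟨C, hC⟩ := isCompact_Icc.exists_bound_of_continuousOn hw
  set M : ℝ := max C 1 with hMdef
  have hM1 : (1:ℝ) ≤ M := le_max_right _ _
  have hM0 : (0:ℝ) < M := by linarith
  have hwbd : ∀ t ∈ Icc (0:ℝ) 1, |w t| ≤ M := fun t ht =>
    le_trans (le_trans (le_of_eq (Real.norm_eq_abs _).symm) (hC t ht)) (le_max_left _ _)
  set C₀ : ℝ := 40*(M+1) with hC₀def
  have hC₀ : 0 < C₀ := by rw [hC₀def]; linarith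
  have hsc2 : 0 < Real.sqrt (c/2) := Real.sqrt_pos.2 (by linarith)
  set δ : ℝ := min (min 1 (c/(2*C₀)))
      (min (ε*Real.sqrt (c/2)/8) (ε^2*(c/2)^2/(64*M^2*C₀))) with hδdef
  have hδpos : 0 < δ := by
    apply lt_min (lt_min one_pos (div_pos hc (by linarith)))
    apply lt_min (div_pos (mul_pos hε hsc2) (by norm_num))
    exact div_pos (mul_pos (pow_pos hε 2) (pow_pos (by linarith : (0:ℝ) < c/2) 2))
      (mul_pos (mul_pos (by norm_num) (pow_pos hM0 2)) hC₀)
  have hδ1 : δ ≤ 1 := le_trans (min_le_left _ _) (min_le_left _ _)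
  have hδ2 : δ ≤ c/(2*C₀) := le_trans (min_le_left _ _) (min_le_right _ _)
  have hδ3 : δ ≤ ε*Real.sqrt (c/2)/8 := le_trans (min_le_right _ _) (min_le_left _ _)
  have hδ4 : δ ≤ ε^2*(c/2)^2/(64*M^2*C₀) := le_trans (min_le_right _ _) (min_le_right _ _)
  refine ⟨δ, hδpos, ?_⟩
  rintro v hv ⟨Mv, hMv⟩ hsup
  have hptw : ∀ s ∈ Icc (0:ℝ) 1, |v s - w s| ≤ δ := by
    intro s hs
    have hbdd : BddAbove ((fun t => |v t - w t|) '' Icc (0:ℝ) 1) := by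
      refine ⟨Mv + M, ?_⟩
      rintro y ⟨r, hr, rfl⟩
      calc |v r - w r| ≤ |v r| + |w r| := abs_sub _ _
        _ ≤ Mv + M := add_le_add (hMv r hr) (hwbd r hr)
    exact le_trans (le_csSup hbdd (mem_image_of_mem _ hs)) hsup.le
  have hvbd : ∀ s ∈ Icc (0:ℝ) 1, |v s| ≤ M + 1 := by
    intro s hs
    have h1' := hptw s hs
    have h2' := hwbd s hs
    have e : v s = (v s - w s) + w s := by ring
    calc |v s| = |(v s - w s) + w s| := by rw [← e]
      _ ≤ |v s - w s| + |w s| := abs_add_le _ _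
      _ ≤ M + 1 := by linarith [hδ1]
  have hpoint : ∀ t ∈ Icc (0:ℝ) 1, |snRatioInt v t - snRatioInt w t| ≤ ε/2 := by
    intro t ht
    have hsub1 : Icc (0:ℝ) t ⊆ Icc 0 1 := Icc_subset_Icc le_rfl ht.2
    have hsub2 : Icc t (1:ℝ) ⊆ Icc 0 1 := Icc_subset_Icc ht.1 le_rfl
    have hiwA : IntervalIntegrable (fun s => (w s - s / t * w t) ^ 2) volume 0 t := by
      apply ContinuousOn.intervalIntegrable
      rw [uIcc_of_le ht.1]
      exact (((hw.mono hsub1).sub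
        (((continuous_id.div_const t).mul continuous_const).continuousOn)).pow 2)
    have hiwB : IntervalIntegrable
        (fun s => (w 1 - w s - (1 - s) / (1 - t) * (w 1 - w t)) ^ 2) volume t 1 := by
      apply ContinuousOn.intervalIntegrable
      rw [uIcc_of_le ht.2]
      exact (((continuousOn_const.sub (hw.mono hsub2)).sub
        ((((continuous_const.sub continuous_id).div_const (1-t)).mul
          continuous_const).continuousOn)).pow 2)
    have hivA := intA hv ht (by linarith : (0:ℝ) ≤ M+1) hvbd
    have hivB := intB hv ht (by linarith : (0:ℝ) ≤ M+1) hvbd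
    have hdA := diffA ht hδpos.le (by linarith : (0:ℝ) ≤ M+1) hM0.le hivA hiwA hvbd hwbd hptw
    have hdB := diffB ht hδpos.le (by linarith : (0:ℝ) ≤ M+1) hM0.le hivB hiwB hvbd hwbd hptw
    set Dv := (∫ s in (0 : ℝ)..t, (v s - s / t * v t) ^ 2)
      + ∫ s in t..(1 : ℝ), (v 1 - v s - (1 - s) / (1 - t) * (v 1 - v t)) ^ 2 with hDv
    set Dw := (∫ s in (0 : ℝ)..t, (w s - s / t * w t) ^ 2)
      + ∫ s in t..(1 : ℝ), (w 1 - w s - (1 - s) / (1 - t) * (w 1 - w t)) ^ 2 with hDw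
    clear_value Dv Dw
    have hDdiff : |Dv - Dw| ≤ C₀ * δ := by
      have hcomb : 2*δ*(2*(M+1) + 2*M) + 4*δ*(4*(M+1) + 4*M) ≤ C₀*δ := by
        rw [hC₀def]; nlinarith [hδpos.le]
      have e : Dv - Dw = ((∫ s in (0 : ℝ)..t, (v s - s / t * v t) ^ 2)
            - ∫ s in (0 : ℝ)..t, (w s - s / t * w t) ^ 2)
          + ((∫ s in t..(1 : ℝ), (v 1 - v s - (1 - s) / (1 - t) * (v 1 - v t)) ^ 2)
            - ∫ s in t..(1 : ℝ), (w 1 - w s - (1 - s) / (1 - t) * (w 1 - w t)) ^ 2) := by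
        rw [hDv, hDw]; ring
      rw [e]
      calc |_ + _| ≤ _ + _ := abs_add_le _ _
        _ ≤ 2*δ*(2*(M+1) + 2*M) + 4*δ*(4*(M+1) + 4*M) := add_le_add hdA hdB
        _ ≤ C₀*δ := hcomb
    have hDwlow : c ≤ Dw := hDw ▸ hcD t ht
    have hDvlow : c/2 ≤ Dv := by
      have hh1 : Dw - Dv ≤ C₀*δ := le_trans (le_abs_self _) (by rwa [abs_sub_comm] at hDdiff)
      have hh2 : C₀*δ ≤ c/2 := by
        have := mul_le_mul_of_nonneg_left hδ2 hC₀.le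
        have e : C₀*(c/(2*C₀)) = c/2 := by field_simp
        linarith
      linarith [hh1, hh2, hDwlow]
    have hnum : |(v t - t * v 1) - (w t - t * w 1)| ≤ 2*δ := by
      have e : (v t - t * v 1) - (w t - t * w 1) = (v t - w t) - t * (v 1 - w 1) := by ring
      rw [e]
      calc |(v t - w t) - t * (v 1 - w 1)|
          ≤ |v t - w t| + |t * (v 1 - w 1)| := abs_sub _ _
        _ ≤ δ + 1*δ := by
            rw [abs_mul, abs_of_nonneg ht.1]
            have h1' := hptw t ht
            have h2' := hptw 1 (by norm_num)
            have h3' := mul_le_mul_of_nonneg_right ht.2 (abs_nonneg (v 1 - w 1))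
            have h4' := mul_le_mul_of_nonneg_left h2' (zero_le_one (α := ℝ))
            linarith
        _ = 2*δ := by ring
    have hnw : |w t - t * w 1| ≤ 2*M := by
      calc |w t - t * w 1| ≤ |w t| + |t * w 1| := abs_sub _ _
        _ ≤ M + 1*M := by
            rw [abs_mul, abs_of_nonneg ht.1]
            have h1' := hwbd t ht
            have h2' := hwbd 1 (by norm_num)
            have h3' := mul_le_mul_of_nonneg_right ht.2 (abs_nonneg (w 1))
            have h4' := mul_le_mul_of_nonneg_left h2' (zero_le_one (α := ℝ))
            linarith
        _ = 2*M := by ring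
    have hrb := ratio_bound hc hδpos.le hM0 hC₀ hDvlow hDwlow hnum hnw hDdiff
    have hb1 : 2*δ/Real.sqrt (c/2) ≤ ε/4 := by
      rw [div_le_iff₀ hsc2]
      nlinarith [hδ3, hsc2, hε]
    have hb2 : 2*M*Real.sqrt (C₀*δ) / (c/2) ≤ ε/4 := by
      have hs : Real.sqrt (C₀*δ) ≤ ε*(c/2)/(8*M) := by
        have hδ4' : C₀*δ ≤ (ε*(c/2)/(8*M))^2 := by
          have := mul_le_mul_of_nonneg_left hδ4 hC₀.le
          have e : C₀*(ε^2*(c/2)^2/(64*M^2*C₀)) = (ε*(c/2)/(8*M))^2 := by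
            field_simp; ring
          linarith
        calc Real.sqrt (C₀*δ) ≤ Real.sqrt ((ε*(c/2)/(8*M))^2) := Real.sqrt_le_sqrt hδ4'
          _ = ε*(c/2)/(8*M) := Real.sqrt_sq (by positivity)
      rw [div_le_iff₀ (by linarith : (0:ℝ) < c/2)]
      have h5' := mul_le_mul_of_nonneg_left hs (by linarith : (0:ℝ) ≤ 2*M)
      have e : 2*M*(ε*(c/2)/(8*M)) = ε/4*(c/2) := by field_simp; ring
      linarith
    have hfin : |snRatioInt v t - snRatioInt w t| ≤ ε/4 + ε/4 := by
      simp only [snRatioInt]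
      rw [← hDv, ← hDw]
      exact le_trans hrb (add_le_add hb1 hb2)
    linarith
  have hfinal : sSup ((fun t => |snRatioInt v t - snRatioInt w t|) '' Set.Icc (0 : ℝ) 1) ≤ ε/2 :=
    Real.sSup_le (by rintro x ⟨t, ht, rfl⟩; exact hpoint t ht) (by linarith)
  linarith
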